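/- Let r ≥ 2 and k ≥ 1, with m = (r−1)k and N = (rk+1)(r−1). Every continuous map g : C → σ^m × σ^k on the colorful subcomplex C satisfying condition (PR1) (for all points of C) extends to a continuous map f : σ^N → σ^m × σ^k satisfying condition (PR1) on all of σ^N. -/

import Mathlib

open Set

noncomputable section

/-- The colorful subcomplex `C ⊆ σ^N`: points of the standard simplex on the vertex set
`Fin r × Fin (m+1)` using at most one vertex from each color class `C_j`. -/
def colorfulComplex (r m : ℕ) : Set ((Fin r × Fin (m + 1)) → ℝ) :=
  {x | x ∈ stdSimplex ℝ (Fin r × Fin (m + 1)) ∧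
    ∀ (j : Fin (m + 1)) (i i' : Fin r), 0 < x (i, j) → 0 < x (i', j) → i = i'}

namespace Statement10Aux

/-- The projection `p : σ^N → σ^m`, `p x j = ∑ i, x (i, j)`. -/
def P {r m : ℕ} (x : (Fin r × Fin (m + 1)) → ℝ) (j : Fin (m + 1)) : ℝ := ∑ i, x (i, j)

/-- Distance to the colorful complex. -/
def L (r m : ℕ) (x : (Fin r × Fin (m + 1)) → ℝ) : ℝ :=
  Metric.infDist x (colorfulComplex r m)

lemma isClosed_colorful (r m : ℕ) : IsClosed (colorfulComplex r m) := by
  have : colorfulComplex r m = stdSimplex ℝ (Fin r × Fin (m + 1)) ∩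
      ⋂ (j : Fin (m + 1)) (i : Fin r) (i' : Fin r),
        {x | 0 < x (i, j) → 0 < x (i', j) → i = i'} := by
    ext x
    simp only [colorfulComplex, mem_setOf_eq, mem_inter_iff, mem_iInter]
  rw [this]
  refine (isClosed_stdSimplex _ _).inter ?_
  refine isClosed_iInter fun j => isClosed_iInter fun i => isClosed_iInter fun i' => ?_
  by_cases h : i = i'
  · simp only [h]
    convert isClosed_univ using 1
    ext x; simp
  · have : {x : (Fin r × Fin (m + 1)) → ℝ | 0 < x (i, j) → 0 < x (i', j) → i = i'} =
        ({x | 0 < x (i, j)} ∩ {x | 0 < x (i', j)})ᶜ := by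
      ext x
      simp only [mem_setOf_eq, compl_inter, mem_union, mem_compl_iff, not_lt]
      constructor
      · intro hx
        by_contra hc
        push_neg at hc
        exact h (hx hc.1 hc.2)
      · intro hx h1 h2
        rcases hx with hx | hx <;> linarith
    rw [this]
    refine (IsOpen.inter ?_ ?_).isClosed_compl
    · exact isOpen_lt continuous_const (continuous_apply _)
    · exact isOpen_lt continuous_const (continuous_apply _)

lemma nonempty_colorful (r m : ℕ) (hr : 0 < r) : (colorfulComplex r m).Nonempty := by
  refine ⟨Pi.single (⟨0, hr⟩, (0 : Fin (m + 1))) 1, single_mem_stdSimplex ℝ _, ?_⟩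
  intro j i i' hi hi'
  have h1 : (i, j) = (⟨0, hr⟩, (0 : Fin (m + 1))) := by
    by_contra hc
    rw [Pi.single_apply, if_neg hc] at hi
    exact lt_irrefl _ hi
  have h2 : (i', j) = (⟨0, hr⟩, (0 : Fin (m + 1))) := by
    by_contra hc
    rw [Pi.single_apply, if_neg hc] at hi'
    exact lt_irrefl _ hi'
  rw [Prod.mk.injEq] at h1 h2
  rw [h1.1, h2.1]

lemma L_nonneg (r m : ℕ) (x : (Fin r × Fin (m + 1)) → ℝ) : 0 ≤ L r m x :=
  Metric.infDist_nonneg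

lemma L_eq_zero_iff (r m : ℕ) (hr : 0 < r) (x : (Fin r × Fin (m + 1)) → ℝ) :
    L r m x = 0 ↔ x ∈ colorfulComplex r m :=
  ((isClosed_colorful r m).mem_iff_infDist_zero (nonempty_colorful r m hr)).symm

lemma continuous_L (r m : ℕ) : Continuous (L r m) :=
  Metric.continuous_infDist_pt _

lemma continuous_P {r m : ℕ} (j : Fin (m + 1)) :
    Continuous (fun x : (Fin r × Fin (m + 1)) → ℝ => P x j) :=
  continuous_finset_sum _ fun i _ => continuous_apply _

lemma P_nonneg {r m : ℕ} {x : (Fin r × Fin (m + 1)) → ℝ}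
    (hx : x ∈ stdSimplex ℝ (Fin r × Fin (m + 1))) (j : Fin (m + 1)) : 0 ≤ P x j :=
  Finset.sum_nonneg fun i _ => hx.1 (i, j)

lemma P_sum {r m : ℕ} {x : (Fin r × Fin (m + 1)) → ℝ}
    (hx : x ∈ stdSimplex ℝ (Fin r × Fin (m + 1))) : ∑ j, P x j = 1 := by
  simp only [P]
  rw [← hx.2, Fintype.sum_prod_type_right]

lemma P_pos_iff {r m : ℕ} {x : (Fin r × Fin (m + 1)) → ℝ}
    (hx : x ∈ stdSimplex ℝ (Fin r × Fin (m + 1))) (j : Fin (m + 1)) :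
    0 < P x j ↔ ∃ i, 0 < x (i, j) := by
  constructor
  · intro h
    by_contra hc
    push_neg at hc
    have : P x j ≤ 0 := Finset.sum_nonpos fun i _ => hc i
    linarith
  · rintro ⟨i, hi⟩
    refine Finset.sum_pos' (fun i' _ => hx.1 (i', j)) ⟨i, Finset.mem_univ i, hi⟩

end Statement10Aux

open Statement10Aux in
/-- every continuous map `g : C → σ^m × σ^k` satisfying condition (PR1)
on `C` extends to a continuous map `f : σ^N → σ^m × σ^k` satisfying condition (PR1) on
all of `σ^N`. -/
theorem statement10 (r k : ℕ) (hr : 2 ≤ r) (hk : 1 ≤ k)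
    (m : ℕ) (hm : m = (r - 1) * k)
    (g : ((Fin r × Fin (m + 1)) → ℝ) → (Fin (m + 1) → ℝ) × (Fin (k + 1) → ℝ))
    (hgc : ContinuousOn g (colorfulComplex r m))
    (hgm : MapsTo g (colorfulComplex r m)
      ((stdSimplex ℝ (Fin (m + 1))) ×ˢ (stdSimplex ℝ (Fin (k + 1)))))
    (hPR1 : ∀ x ∈ colorfulComplex r m,
      (∀ j : Fin (m + 1), 0 < (g x).1 j ↔ ∃ i : Fin r, 0 < x (i, j)) ∧
      (∀ l : Fin (k + 1), 0 < (g x).2 l)) :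
    ∃ f : ((Fin r × Fin (m + 1)) → ℝ) → (Fin (m + 1) → ℝ) × (Fin (k + 1) → ℝ),
      ContinuousOn f (stdSimplex ℝ (Fin r × Fin (m + 1))) ∧
      MapsTo f (stdSimplex ℝ (Fin r × Fin (m + 1)))
        ((stdSimplex ℝ (Fin (m + 1))) ×ˢ (stdSimplex ℝ (Fin (k + 1)))) ∧
      (∀ x ∈ stdSimplex ℝ (Fin r × Fin (m + 1)),
        (∀ j : Fin (m + 1), 0 < (f x).1 j ↔ ∃ i : Fin r, 0 < x (i, j)) ∧
        (∀ l : Fin (k + 1), 0 < (f x).2 l)) ∧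
      (∀ x ∈ colorfulComplex r m, f x = g x) := by
  have hr0 : 0 < r := lt_of_lt_of_le two_pos hr
  set S := stdSimplex ℝ (Fin r × Fin (m + 1)) with hS
  set C := colorfulComplex r m with hC
  have hCS : C ⊆ S := fun x hx => hx.1
  -- Tietze extension of g
  obtain ⟨G, hG⟩ : ∃ G : C((Fin r × Fin (m + 1)) → ℝ,
      (Fin (m + 1) → ℝ) × (Fin (k + 1) → ℝ)), ∀ x ∈ C, G x = g x := by
    obtain ⟨G, hG⟩ := ContinuousMap.exists_restrict_eq (Y := (Fin (m + 1) → ℝ) × (Fin (k + 1) → ℝ))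
      (isClosed_colorful r m) ⟨(colorfulComplex r m).restrict g, hgc.restrict⟩
    exact ⟨G, fun x hx => congrFun (congrArg DFunLike.coe hG) ⟨x, hx⟩⟩
  -- the blended functions
  set u : ((Fin r × Fin (m + 1)) → ℝ) → Fin (m + 1) → ℝ :=
    fun x j => max 0 ((G x).1 j) with hu
  set w : ((Fin r × Fin (m + 1)) → ℝ) → Fin (m + 1) → ℝ :=
    fun x j => u x j * (P x j / (P x j + L r m x)) + L r m x * P x j with hw
  set v : ((Fin r × Fin (m + 1)) → ℝ) → Fin (k + 1) → ℝ :=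
    fun x l => max 0 ((G x).2 l) + L r m x with hv
  -- key pointwise facts
  have hL0 : ∀ x ∈ C, L r m x = 0 := fun x hx => (L_eq_zero_iff r m hr0 x).2 hx
  have hLpos : ∀ x, x ∉ C → 0 < L r m x := by
    intro x hx
    rcases lt_or_eq_of_le (L_nonneg r m x) with h | h
    · exact h
    · exact absurd ((L_eq_zero_iff r m hr0 x).1 h.symm) hx
  have hPzero : ∀ x ∈ S, ∀ j, P x j = 0 → ∀ i, x (i, j) = 0 := by
    intro x hx j hj i
    by_contra hc
    have : 0 < x (i, j) := lt_of_le_of_ne (hx.1 (i, j)) (Ne.symm hc)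
    have := (P_pos_iff hx j).2 ⟨i, this⟩
    linarith
  -- on C, w equals (g x).1 and v equals (g x).2
  have hwC : ∀ x ∈ C, ∀ j, w x j = (g x).1 j := by
    intro x hx j
    have hL := hL0 x hx
    have hg1 : 0 ≤ (g x).1 j := (hgm hx).1.1 j
    have huj : u x j = (g x).1 j := by simp [hu, hG x hx, hg1]
    by_cases hp : 0 < P x j
    · simp [hw, hL, huj, div_self (ne_of_gt hp)]
    · have hp0 : P x j = 0 := le_antisymm (not_lt.1 hp) (P_nonneg hx.1 j)
      have : ¬(0 < (g x).1 j) := by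
        rw [(hPR1 x hx).1 j]
        push_neg
        intro i
        rw [hPzero x (hCS hx) j hp0 i]
      have hg0 : (g x).1 j = 0 := le_antisymm (not_lt.1 this) hg1
      simp [hw, hL, huj, hg0, hp0]
  have hvC : ∀ x ∈ C, ∀ l, v x l = (g x).2 l := by
    intro x hx l
    have hg2 : 0 ≤ (g x).2 l := (hgm hx).2.1 l
    simp [hv, hG x hx, hg2, hL0 x hx]
  -- nonnegativity and sign of w on S
  have hw_nonneg : ∀ x ∈ S, ∀ j, 0 ≤ w x j := by
    intro x hx j
    have h1 : 0 ≤ u x j := le_max_left _ _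
    have h2 : 0 ≤ P x j := P_nonneg hx j
    have h3 : 0 ≤ L r m x := L_nonneg r m x
    have h4 : 0 ≤ P x j / (P x j + L r m x) := div_nonneg h2 (by linarith)
    have := mul_nonneg h1 h4
    have := mul_nonneg h3 h2
    simp only [hw]; linarith
  have hw_pos_iff : ∀ x ∈ S, ∀ j, (0 < w x j ↔ 0 < P x j) := by
    intro x hx j
    by_cases hxC : x ∈ C
    · rw [hwC x hxC j, (hPR1 x hxC).1 j, P_pos_iff hx j]
    · have hL := hLpos x hxC
      constructor
      · intro h
        by_contra hp
        have hp0 : P x j = 0 := le_antisymm (not_lt.1 hp) (P_nonneg hx j)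
        simp [hw, hp0] at h
      · intro hp
        have h1 : 0 ≤ u x j := le_max_left _ _
        have h4 : 0 ≤ P x j / (P x j + L r m x) := div_nonneg (le_of_lt hp) (by linarith)
        have h5 : 0 < L r m x * P x j := mul_pos hL hp
        have := mul_nonneg h1 h4
        simp only [hw]; linarith
  -- sum of w is positive on S
  have hWpos : ∀ x ∈ S, 0 < ∑ j, w x j := by
    intro x hx
    have : ∃ j, 0 < P x j := by
      by_contra hc
      push_neg at hc
      have : ∑ j, P x j ≤ 0 := Finset.sum_nonpos fun j _ => hc j
      rw [P_sum hx] at this; linarith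
    obtain ⟨j, hj⟩ := this
    exact Finset.sum_pos' (fun j' _ => hw_nonneg x hx j') ⟨j, Finset.mem_univ j,
      (hw_pos_iff x hx j).2 hj⟩
  -- v positive on S
  have hv_pos : ∀ x ∈ S, ∀ l, 0 < v x l := by
    intro x hx l
    by_cases hxC : x ∈ C
    · rw [hvC x hxC l]; exact (hPR1 x hxC).2 l
    · have h1 : 0 ≤ max 0 ((G x).2 l) := le_max_left _ _
      have := hLpos x hxC
      simp only [hv]; linarith
  have hVpos : ∀ x ∈ S, 0 < ∑ l, v x l :=
    fun x hx => Finset.sum_pos (fun l _ => hv_pos x hx l) Finset.univ_nonempty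
  -- sums on C
  have hWC : ∀ x ∈ C, ∑ j, w x j = 1 := by
    intro x hx
    rw [Finset.sum_congr rfl fun j _ => hwC x hx j]
    exact (hgm hx).1.2
  have hVC : ∀ x ∈ C, ∑ l, v x l = 1 := by
    intro x hx
    rw [Finset.sum_congr rfl fun l _ => hvC x hx l]
    exact (hgm hx).2.2
  -- the extension
  refine ⟨fun x => (fun j => w x j / ∑ j', w x j', fun l => v x l / ∑ l', v x l'), ?_, ?_, ?_, ?_⟩
  · -- continuity
    have hu_cont : ∀ j, Continuous fun x => u x j :=
      fun j => continuous_const.max ((continuous_apply j).comp (continuous_fst.comp G.continuous))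
    have hw_cont : ∀ j, ContinuousOn (fun x => w x j) S := by
      intro j
      have h2 : Continuous fun x => L r m x * P x j :=
        (continuous_L r m).mul (continuous_P j)
      refine ContinuousOn.add ?_ h2.continuousOn
      intro x hx
      by_cases hd : 0 < P x j + L r m x
      · refine ContinuousAt.continuousWithinAt ?_
        exact ((hu_cont j).continuousAt).mul
          (((continuous_P j).continuousAt).div
            (((continuous_P j).add (continuous_L r m)).continuousAt) (ne_of_gt hd))
      · -- here P x j = 0 and L x = 0, so u x j = 0; squeeze
        have hP0 : P x j = 0 := by
          have := P_nonneg hx j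
          have := L_nonneg r m x
          have := not_lt.1 hd
          linarith
        have hL0' : L r m x = 0 := by
          have := P_nonneg hx j
          have := L_nonneg r m x
          have := not_lt.1 hd
          linarith
        have hxC : x ∈ C := (L_eq_zero_iff r m hr0 x).1 hL0'
        have hu0 : u x j = 0 := by
          have : ¬(0 < (g x).1 j) := by
            rw [(hPR1 x hxC).1 j]
            push_neg
            intro i
            rw [hPzero x hx j hP0 i]
          have hg0 : (g x).1 j = 0 := le_antisymm (not_lt.1 this) ((hgm hxC).1.1 j)
          simp [hu, hG x hxC, hg0]
        have hval : u x j * (P x j / (P x j + L r m x)) = 0 := by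
          rw [hu0, zero_mul]
        have hbound : ∀ y ∈ S, u y j * (P y j / (P y j + L r m y)) ≤ u y j := by
          intro y hy
          have h1 : 0 ≤ u y j := le_max_left _ _
          have h2 : 0 ≤ P y j := P_nonneg hy j
          have h3 : 0 ≤ L r m y := L_nonneg r m y
          by_cases hd' : P y j + L r m y = 0
          · simpa [hd'] using h1
          · have hd'' : 0 < P y j + L r m y := lt_of_le_of_ne (by linarith) (Ne.symm hd')
            have : P y j / (P y j + L r m y) ≤ 1 := by
              rw [div_le_one hd'']; linarith
            calc u y j * (P y j / (P y j + L r m y)) ≤ u y j * 1 :=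
                  mul_le_mul_of_nonneg_left this h1
              _ = u y j := mul_one _
        have hnn : ∀ y ∈ S, 0 ≤ u y j * (P y j / (P y j + L r m y)) := by
          intro y hy
          have h1 : 0 ≤ u y j := le_max_left _ _
          have h2 : 0 ≤ P y j := P_nonneg hy j
          have h3 : 0 ≤ L r m y := L_nonneg r m y
          exact mul_nonneg h1 (div_nonneg h2 (by linarith))
        have htend : Filter.Tendsto (fun y => u y j) (nhdsWithin x S) (nhds 0) := by
          rw [← hu0]
          exact ((hu_cont j).continuousAt).continuousWithinAt
        have key : Filter.Tendsto (fun y => u y j * (P y j / (P y j + L r m y)))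
            (nhdsWithin x S) (nhds 0) :=
          squeeze_zero' (eventually_nhdsWithin_of_forall hnn)
            (eventually_nhdsWithin_of_forall hbound) htend
        unfold ContinuousWithinAt
        convert key using 2
    have hW_cont : ContinuousOn (fun x => ∑ j', w x j') S := by
      refine continuousOn_finset_sum _ ?_
      intro j _; exact hw_cont j
    have hv_cont : ∀ l, Continuous fun x => v x l := fun l =>
      (continuous_const.max ((continuous_apply l).comp (continuous_snd.comp G.continuous))).add
        (continuous_L r m)
    refine ContinuousOn.prodMk ?_ ?_
    · refine continuousOn_pi.2 fun j => ?_
      exact (hw_cont j).div hW_cont fun x hx => ne_of_gt (hWpos x hx)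
    · refine continuousOn_pi.2 fun l => ?_
      exact ((hv_cont l).continuousOn).div
        (continuous_finset_sum _ fun l' _ => hv_cont l').continuousOn
        fun x hx => ne_of_gt (hVpos x hx)
  · -- maps to
    intro x hx
    constructor
    · constructor
      · intro j
        exact div_nonneg (hw_nonneg x hx j) (le_of_lt (hWpos x hx))
      · rw [← Finset.sum_div, div_self (ne_of_gt (hWpos x hx))]
    · constructor
      · intro l
        exact div_nonneg (le_of_lt (hv_pos x hx l)) (le_of_lt (hVpos x hx))
      · rw [← Finset.sum_div, div_self (ne_of_gt (hVpos x hx))]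
  · -- PR1
    intro x hx
    constructor
    · intro j
      rw [div_pos_iff_of_pos_right (hWpos x hx), hw_pos_iff x hx j, P_pos_iff hx j]
    · intro l
      exact div_pos (hv_pos x hx l) (hVpos x hx)
  · -- extends g
    intro x hx
    refine Prod.ext ?_ ?_
    · funext j
      show w x j / (∑ j', w x j') = (g x).1 j
      rw [hWC x hx, hwC x hx j, div_one]
    · funext l
      show v x l / (∑ l', v x l') = (g x).2 l
      rw [hVC x hx, hvC x hx l, div_one]
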